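/- Let 0<q<1 and w∈ℂ∖{0}, and let H(t) := 4·Σ_{n=1}^∞ n·e^{−t|w|[n]_q} for t>0. Then for every ε>0 the function t ↦ t^ε·H(t) is continuous and bounded on (0,∞). -/

import Mathlib

open Complex Real

/-- The q-number `[n]_q = (q^{-n} - q^n)/(q^{-1} - q)`. -/
noncomputable def qnum (q : ℝ) (n : ℕ) : ℝ :=
  (q ^ (-(n : ℤ)) - q ^ (n : ℤ)) / (q ^ (-1 : ℤ) - q)

/-- The heat trace `H(t) = Tr e^{-t|D|} = 4 Σ_{n≥1} n e^{-t|w|[n]_q}` of the Podleś-sphere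
Dirac operator. -/
noncomputable def heatTrace (q : ℝ) (w : ℂ) (t : ℝ) : ℝ :=
  4 * ∑' n : ℕ, ((n : ℝ) + 1) * Real.exp (-(t * (‖w‖ * qnum q (n + 1))))

lemma qnum_lb {q : ℝ} (hq : 0 < q) (hq1 : q < 1) (n : ℕ) :
    (q ^ n)⁻¹ ≤ qnum q (n + 1) := by
  have hq0 : q ≠ 0 := hq.ne'
  have hpn : (0:ℝ) < q ^ n := pow_pos hq n
  have hpn1 : (0:ℝ) < q ^ (n+1) := pow_pos hq (n+1)
  have h1 : q ^ n ≤ 1 := pow_le_one₀ hq.le hq1.le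
  have hinv : 1 < q⁻¹ := (one_lt_inv₀ hq).mpr hq1
  have hD : 0 < q ^ (-1 : ℤ) - q := by
    rw [zpow_neg_one]; linarith
  have hle : q ^ n ≤ (q ^ n)⁻¹ := h1.trans ((one_le_inv₀ hpn).mpr h1)
  rw [qnum, le_div_iff₀ hD]
  have e1 : q ^ (-((n+1 : ℕ) : ℤ)) = (q ^ (n+1))⁻¹ := by
    rw [zpow_neg, zpow_natCast]
  push_cast at e1
  have e2 : q ^ (((n+1:ℕ)) : ℤ) = q ^ (n+1) := zpow_natCast q (n+1)
  push_cast at e2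
  rw [zpow_neg_one]
  push_cast
  rw [e1, e2]
  have key : q ^ (n+1) ≤ q * (q^n)⁻¹ := by
    calc q ^ (n+1) = q * q ^ n := by ring
    _ ≤ q * (q^n)⁻¹ := mul_le_mul_of_nonneg_left hle hq.le
  have lhs_eq : (q^n)⁻¹ * (q⁻¹ - q) = (q^(n+1))⁻¹ - q * (q^n)⁻¹ := by
    field_simp
    ring
  linarith

lemma rpow_le_const_mul_exp (ε : ℝ) (hε : 0 < ε) :
    ∃ C : ℝ, 0 < C ∧ ∀ x : ℝ, 0 ≤ x → x ^ ε ≤ C * Real.exp x := by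
  set m : ℕ := ⌈ε⌉₊ + 1 with hm
  have hmpos : (0:ℝ) < m := by positivity
  have hεm : ε ≤ (m : ℝ) := le_trans (Nat.le_ceil ε) (by exact_mod_cast Nat.le_succ _)
  refine ⟨(m:ℝ)^m + 1, by positivity, fun x hx => ?_⟩
  rcases le_or_gt x 1 with hx1 | hx1
  · have : x ^ ε ≤ 1 := Real.rpow_le_one hx hx1 hε.le
    have he : 1 ≤ Real.exp x := by
      rw [← Real.exp_zero]; exact Real.exp_le_exp.mpr hx
    nlinarith [pow_pos hmpos m, Real.exp_pos x]
  · have h1 : x ^ ε ≤ x ^ (m:ℝ) := Real.rpow_le_rpow_of_exponent_le hx1.le hεm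
    rw [Real.rpow_natCast] at h1
    have h2 : x ^ m ≤ (m:ℝ)^m * Real.exp x := by
      have hb' : x / m ≤ Real.exp (x / m) := by
        have := Real.add_one_le_exp (x / m)
        nlinarith [Real.exp_pos (x/m)]
      have hpow : (x / m) ^ m ≤ (Real.exp (x / m)) ^ m :=
        pow_le_pow_left₀ (by positivity) hb' m
      have hexp : (Real.exp (x / m)) ^ m = Real.exp x := by
        rw [← Real.exp_nat_mul]
        congr 1
        field_simp
      rw [hexp, div_pow] at hpow
      rw [div_le_iff₀ (by positivity)] at hpow
      linarith [hpow]
    nlinarith [Real.exp_pos x]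

lemma exp_neg_le (y : ℝ) (hy : 0 < y) : Real.exp (-y) ≤ 4 * (y^2)⁻¹ := by
  have hsq : y^2 ≤ 4 * Real.exp y := by
    have h := Real.add_one_le_exp (y/2)
    have h2 : Real.exp (y/2) * Real.exp (y/2) = Real.exp y := by
      rw [← Real.exp_add]; ring_nf
    nlinarith [Real.exp_pos (y/2)]
  rw [Real.exp_neg, inv_le_comm₀ (Real.exp_pos y) (by positivity)]
  have he : (4 * (y^2)⁻¹)⁻¹ = y^2/4 := by field_simp
  rw [he]
  linarith

lemma summable_nat_add_one_mul_geometric {r : ℝ} (h0 : 0 ≤ r) (h1 : r < 1) :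
    Summable (fun n : ℕ => ((n:ℝ)+1) * r ^ n) := by
  have hr : ‖r‖ < 1 := by rwa [Real.norm_eq_abs, _root_.abs_of_nonneg h0]
  have h2 := summable_pow_mul_geometric_of_norm_lt_one 1 hr (R := ℝ)
  have h3 : Summable (fun n : ℕ => r ^ n) := summable_geometric_of_lt_one h0 h1
  refine (h2.add h3).congr fun n => ?_
  ring

lemma term_bound {q a ε C : ℝ} (hq : 0 < q) (hq1 : q < 1) (ha : 0 < a) (hε : 0 < ε)
    (hC : 0 < C) (hCb : ∀ x : ℝ, 0 ≤ x → x ^ ε ≤ C * Real.exp x)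
    {t : ℝ} (ht : 0 < t) (n : ℕ) :
    t ^ ε * Real.exp (-(t * (a * qnum q (n+1)))) ≤ C * a ^ (-ε) * (q ^ ε) ^ n := by
  have hqn : (0:ℝ) < (q^n)⁻¹ := by positivity
  set b : ℝ := a * (q^n)⁻¹ with hbdef
  have hb : 0 < b := by positivity
  have hmono : Real.exp (-(t * (a * qnum q (n+1)))) ≤ Real.exp (-(t*b)) := by
    apply Real.exp_le_exp.mpr
    apply neg_le_neg
    apply mul_le_mul_of_nonneg_left _ ht.le
    exact mul_le_mul_of_nonneg_left (qnum_lb hq hq1 n) ha.le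
  have hkey : (t*b)^ε * Real.exp (-(t*b)) ≤ C := by
    have h := hCb (t*b) (by positivity)
    calc (t*b)^ε * Real.exp (-(t*b))
        ≤ (C * Real.exp (t*b)) * Real.exp (-(t*b)) :=
          mul_le_mul_of_nonneg_right h (Real.exp_pos _).le
      _ = C := by rw [mul_assoc, ← Real.exp_add]; simp
  have hts : t ^ ε = (t*b)^ε * b^(-ε) := by
    rw [Real.mul_rpow ht.le hb.le, Real.rpow_neg hb.le, mul_assoc,
      mul_inv_cancel₀ (by positivity : (b:ℝ)^ε ≠ 0), mul_one]
  have hbneg : b ^ (-ε) = a^(-ε) * (q^ε)^n := by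
    rw [hbdef, Real.mul_rpow ha.le hqn.le]
    congr 1
    rw [← Real.rpow_natCast q n, ← Real.rpow_neg hq.le, ← Real.rpow_natCast (q ^ ε) n,
      ← Real.rpow_mul hq.le, ← Real.rpow_mul hq.le]
    congr 1
    ring
  calc t ^ ε * Real.exp (-(t * (a * qnum q (n+1))))
      ≤ t ^ ε * Real.exp (-(t*b)) :=
        mul_le_mul_of_nonneg_left hmono (Real.rpow_nonneg ht.le ε)
    _ = (t*b)^ε * Real.exp (-(t*b)) * b^(-ε) := by rw [hts]; ring
    _ ≤ C * b^(-ε) := mul_le_mul_of_nonneg_right hkey (Real.rpow_nonneg hb.le _)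
    _ = C * a^(-ε) * (q^ε)^n := by rw [hbneg]; ring

lemma term_bound' {q a : ℝ} (hq : 0 < q) (hq1 : q < 1) (ha : 0 < a)
    {δ t : ℝ} (hδ : 0 < δ) (ht : δ ≤ t) (n : ℕ) :
    ((n:ℝ)+1) * Real.exp (-(t * (a * qnum q (n+1)))) ≤
      ((n:ℝ)+1) * (4 * ((δ*a)^2)⁻¹) * (q^2)^n := by
  have hqn : (0:ℝ) < (q^n)⁻¹ := by positivity
  set y := δ * (a * (q^n)⁻¹) with hy
  have hy0 : 0 < y := by positivity
  have hmono : Real.exp (-(t * (a * qnum q (n+1)))) ≤ Real.exp (-y) := by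
    apply Real.exp_le_exp.mpr
    apply neg_le_neg
    have h1 : a * (q^n)⁻¹ ≤ a * qnum q (n+1) :=
      mul_le_mul_of_nonneg_left (qnum_lb hq hq1 n) ha.le
    calc y = δ * (a * (q^n)⁻¹) := rfl
    _ ≤ t * (a * qnum q (n+1)) :=
        mul_le_mul ht h1 (by positivity) (le_trans hδ.le ht)
  have h2 : Real.exp (-y) ≤ 4 * (y^2)⁻¹ := exp_neg_le y hy0
  have h3 : 4 * (y^2)⁻¹ = (4 * ((δ*a)^2)⁻¹) * (q^2)^n := by
    have hyy : y^2 = (δ*a)^2 * ((q^2)^n)⁻¹ := by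
      rw [hy, show ((q^2)^n : ℝ) = (q^n)^2 by rw [← pow_mul, ← pow_mul, Nat.mul_comm]]
      field_simp
    rw [hyy, mul_inv, inv_inv]
    ring
  calc ((n:ℝ)+1) * Real.exp (-(t * (a * qnum q (n+1))))
      ≤ ((n:ℝ)+1) * (4 * (y^2)⁻¹) :=
        mul_le_mul_of_nonneg_left (hmono.trans h2) (by positivity)
    _ = ((n:ℝ)+1) * (4 * ((δ*a)^2)⁻¹) * (q^2)^n := by rw [h3]; ring

/-- for every `ε > 0`, the function `t ↦ t^ε · H(t)` is continuous and
bounded on `(0,∞)`. -/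
theorem heatTrace_teps_bounded (q : ℝ) (hq : 0 < q) (hq1 : q < 1)
    (w : ℂ) (hw : w ≠ 0) (ε : ℝ) (hε : 0 < ε) :
    ContinuousOn (fun t : ℝ => t ^ ε * heatTrace q w t) (Set.Ioi 0) ∧
    ∃ C : ℝ, ∀ t ∈ Set.Ioi (0 : ℝ), t ^ ε * heatTrace q w t ≤ C := by
  obtain ⟨C, hC, hCb⟩ := rpow_le_const_mul_exp ε hε
  set a := ‖w‖ with hadef
  have ha : 0 < a := norm_pos_iff.mpr hw
  have hqe0 : (0:ℝ) ≤ q^ε := Real.rpow_nonneg hq.le ε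
  have hqe1 : q^ε < 1 := Real.rpow_lt_one hq.le hq1 hε
  have hq20 : (0:ℝ) ≤ q^2 := by positivity
  have hq21 : q^2 < 1 := by nlinarith
  have hsum_eps : Summable (fun n : ℕ => ((n:ℝ)+1) * (q^ε)^n) :=
    summable_nat_add_one_mul_geometric hqe0 hqe1
  have hterm_nonneg : ∀ (t : ℝ) (n : ℕ),
      0 ≤ ((n:ℝ)+1) * Real.exp (-(t*(a*qnum q (n+1)))) := fun t n => by positivity
  have hdom : ∀ δ : ℝ, 0 < δ →
      Summable (fun n : ℕ => ((n:ℝ)+1) * (4 * ((δ*a)^2)⁻¹) * (q^2)^n) := by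
    intro δ hδ
    have h := (summable_nat_add_one_mul_geometric hq20 hq21).mul_left (4 * ((δ*a)^2)⁻¹)
    refine h.congr fun n => ?_
    ring
  have hsummand : ∀ t : ℝ, 0 < t →
      Summable (fun n : ℕ => ((n:ℝ)+1) * Real.exp (-(t*(a*qnum q (n+1))))) := by
    intro t ht
    exact Summable.of_nonneg_of_le (fun n => hterm_nonneg t n)
      (fun n => term_bound' hq hq1 ha ht le_rfl n) (hdom t ht)
  constructor
  · apply continuousOn_of_forall_continuousAt
    intro t₀ ht₀
    simp only [Set.mem_Ioi] at ht₀
    set δ := t₀/2 with hδdef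
    have hδ : 0 < δ := by positivity
    have hco : ContinuousOn
        (fun t => ∑' n : ℕ, ((n:ℝ)+1) * Real.exp (-(t*(a*qnum q (n+1))))) (Set.Ioi δ) := by
      apply continuousOn_tsum
        (u := fun n : ℕ => ((n:ℝ)+1) * (4 * ((δ*a)^2)⁻¹) * (q^2)^n)
      · intro n
        apply Continuous.continuousOn
        fun_prop
      · exact hdom δ hδ
      · intro n t htmem
        rw [Real.norm_eq_abs, _root_.abs_of_nonneg (hterm_nonneg t n)]
        exact term_bound' hq hq1 ha hδ (le_of_lt htmem) n
    have h1 : ContinuousAt (heatTrace q w) t₀ := by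
      have hc := hco.continuousAt (Ioi_mem_nhds (show δ < t₀ by
        rw [hδdef]; linarith))
      unfold heatTrace
      exact continuousAt_const.mul hc
    have h2 : ContinuousAt (fun t : ℝ => t ^ ε) t₀ :=
      Real.continuousAt_rpow_const t₀ ε (Or.inl (ne_of_gt ht₀))
    exact h2.mul h1
  · refine ⟨4 * ((C * a^(-ε)) * ∑' n : ℕ, ((n:ℝ)+1)*(q^ε)^n), fun t ht => ?_⟩
    simp only [Set.mem_Ioi] at ht
    have hs1 := hsummand t ht
    calc t^ε * heatTrace q w t
        = 4 * ∑' n : ℕ, t^ε * (((n:ℝ)+1) * Real.exp (-(t*(a*qnum q (n+1))))) := by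
          rw [heatTrace, tsum_mul_left]; ring
      _ ≤ 4 * ∑' n : ℕ, (C * a^(-ε)) * (((n:ℝ)+1) * (q^ε)^n) := by
          apply mul_le_mul_of_nonneg_left _ (by norm_num : (0:ℝ) ≤ 4)
          apply Summable.tsum_le_tsum _ (hs1.mul_left (t^ε)) (hsum_eps.mul_left _)
          intro n
          have hb := term_bound hq hq1 ha hε hC hCb ht n
          calc t^ε * (((n:ℝ)+1) * Real.exp (-(t*(a*qnum q (n+1)))))
              = ((n:ℝ)+1) * (t^ε * Real.exp (-(t*(a*qnum q (n+1))))) := by ring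
            _ ≤ ((n:ℝ)+1) * (C * a^(-ε) * (q^ε)^n) :=
                mul_le_mul_of_nonneg_left hb (by positivity)
            _ = (C * a^(-ε)) * (((n:ℝ)+1) * (q^ε)^n) := by ring
      _ = 4 * ((C * a^(-ε)) * ∑' n : ℕ, ((n:ℝ)+1)*(q^ε)^n) := by rw [tsum_mul_left]
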